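/- Characterization of the inverse data: let T ≥ 1 and let (r_0, r_1, …, r_{2T−2}) ∈ ℝ^{2T−1} with r_0 = 1. There exists a potential b : ℕ → ℝ such that u^δ_{1,s+1} = r_s for all s = 0, 1, …, 2T−2 (i.e., (r_0,…,r_{2T−2}) is the response vector of the system with potential b) if and only if the T×T matrix C^T with entries C^T_{ij} = Σ_{k=0}^{T−max(i,j)} r_{|i−j|+2k} is positive definite and det C^l = 1 for every 1 ≤ l ≤ T, where C^l is the l×l matrix with entries C^l_{ij} = Σ_{k=0}^{l−max(i,j)} r_{|i−j|+2k}. -/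

import Mathlib

/-- `sol b f t n` is the solution `u^f_{n,t}` of the discrete Schrödinger dynamical system
with potential `b` and boundary control `f`:
`u_{n,t+1} + u_{n,t-1} - u_{n+1,t} - u_{n-1,t} + b_n u_{n,t} = 0` for `n ≥ 1`, `t ≥ 0`,
`u_{n,-1} = u_{n,0} = 0` for `n ≥ 1`, and `u_{0,t} = f_t` for `t ≥ 0`
(the first argument is the time `t`, the second the space variable `n`). -/
noncomputable def sol (b f : ℕ → ℝ) : ℕ → ℕ → ℝ
  | 0, n => if n = 0 then f 0 else 0
  | 1, n => if n = 0 then f 1 else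
      sol b f 0 (n + 1) + sol b f 0 (n - 1) - b n * sol b f 0 n
  | (t + 2), n => if n = 0 then f (t + 2) else
      sol b f (t + 1) (n + 1) + sol b f (t + 1) (n - 1) - b n * sol b f (t + 1) n - sol b f t n

/-- The delta control: `δ_0 = 1`, `δ_t = 0` for `t ≥ 1`. -/
noncomputable def delta : ℕ → ℝ := fun t => if t = 0 then 1 else 0

/-- The entries of the connecting matrix: `Cmat r T i j = Σ_{k=0}^{T - max i j} r_{|i-j| + 2k}`
(`i`, `j` are 1-based indices). -/
noncomputable def Cmat (r : ℕ → ℝ) (T i j : ℕ) : ℝ :=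
  ∑ k ∈ Finset.range (T - max i j + 1), r (max i j - min i j + 2 * k)

namespace IPAux
open Matrix

lemma sol_left (b f : ℕ → ℝ) (t : ℕ) : sol b f t 0 = f t := by
  match t with
  | 0 => simp [sol]
  | 1 => simp [sol]
  | (t+2) => simp [sol]

lemma sol_zero (b f : ℕ → ℝ) {n : ℕ} (hn : n ≠ 0) : sol b f 0 n = 0 := by
  simp [sol, hn]

lemma sol_succ (b f : ℕ → ℝ) (t : ℕ) {n : ℕ} (hn : n ≠ 0) :
    sol b f (t+1) n = sol b f t (n+1) + sol b f t (n-1) - b n * sol b f t n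
      - sol b f (t-1) n := by
  match t with
  | 0 => simp [sol, hn, sol_zero b f hn]
  | (t+1) => simp [sol, hn]

lemma sol_cone (b f : ℕ → ℝ) : ∀ t n, t < n → sol b f t n = 0 := by
  intro t
  induction t using Nat.strong_induction_on with
  | _ t ih =>
    intro n hn
    match t with
    | 0 => exact sol_zero b f (by omega)
    | (t+1) =>
      rw [sol_succ b f t (by omega : n ≠ 0)]
      rw [ih t (by omega) (n+1) (by omega), ih t (by omega) n (by omega),
        ih t (by omega) (n-1) (by omega), ih (t-1) (by omega) n (by omega)]
      ring

lemma sol_diag (b : ℕ → ℝ) : ∀ t, sol b delta t t = 1 := by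
  intro t
  induction t with
  | zero => simp [sol, delta]
  | succ t ih =>
    rw [sol_succ b delta t (by omega : t + 1 ≠ 0)]
    rw [sol_cone b delta t (t+1+1) (by omega), sol_cone b delta t (t+1) (by omega),
      sol_cone b delta (t-1) (t+1) (by omega)]
    simpa using ih


/-- truncated response -/
noncomputable def resp (b : ℕ → ℝ) (s : ℕ) : ℝ := sol b delta (s+1) 1

noncomputable def QQ (b : ℕ → ℝ) (N a c : ℕ) : ℝ :=
  ∑ n ∈ Finset.range N, sol b delta a (n+1) * sol b delta c (n+1)

lemma QQ_congr (b : ℕ → ℝ) {N M a : ℕ} (c : ℕ) (h : a ≤ N) (h' : N ≤ M) :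
    QQ b N a c = QQ b M a c := by
  unfold QQ
  apply Finset.sum_subset (Finset.range_subset_range.2 h')
  intro n hn hn'
  simp only [Finset.mem_range] at hn hn'
  rw [sol_cone b delta a (n+1) (by omega), zero_mul]

noncomputable def Qc (b : ℕ → ℝ) (a c : ℕ) : ℝ := QQ b a a c

lemma Qc_of_large (b : ℕ → ℝ) {N a : ℕ} (c : ℕ) (h : a ≤ N) : Qc b a c = QQ b N a c :=
  QQ_congr b c le_rfl h

lemma Qc_zero_right (b : ℕ → ℝ) (a : ℕ) : Qc b a 0 = 0 := by
  unfold Qc QQ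
  refine Finset.sum_eq_zero fun n _ => ?_
  rw [sol_zero b delta (by omega : n + 1 ≠ 0)]
  ring

lemma Qc_zero_left (b : ℕ → ℝ) (c : ℕ) : Qc b 0 c = 0 := by
  simp [Qc, QQ]

lemma Qc_one (b : ℕ → ℝ) (t : ℕ) (ht : 1 ≤ t) : Qc b t 1 = sol b delta t 1 := by
  unfold Qc QQ
  rw [Finset.sum_eq_single 0]
  · simp [sol_diag b 1]
  · intro n hn hn0
    rw [sol_cone b delta 1 (n+1) (by omega)]
    ring
  · intro h
    simp only [Finset.mem_range] at h
    omega

/-- the wave-equation identity for Q -/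
lemma Qc_wave (b : ℕ → ℝ) (a c : ℕ) :
    Qc b (a+2) (c+1) + Qc b a (c+1) = Qc b (a+1) (c+2) + Qc b (a+1) c := by
  set N := a + c + 4 with hN
  rw [Qc_of_large b (c+1) (by omega : a + 2 ≤ N), Qc_of_large b (c+1) (by omega : a ≤ N),
    Qc_of_large b (c+2) (by omega : a + 1 ≤ N), Qc_of_large b c (by omega : a + 1 ≤ N)]
  unfold QQ
  rw [← Finset.sum_add_distrib, ← Finset.sum_add_distrib]
  rw [← sub_eq_zero, ← Finset.sum_sub_distrib]
  set w := fun n t => sol b delta t n with hw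
  have key : ∀ n ∈ Finset.range N,
      (w (n+1) (a+2) * w (n+1) (c+1) + w (n+1) a * w (n+1) (c+1))
      - (w (n+1) (a+1) * w (n+1) (c+2) + w (n+1) (a+1) * w (n+1) c)
      = (w (n+1+1) (a+1) * w (n+1) (c+1) - w (n+1) (a+1) * w (n+1+1) (c+1))
        - (w (n+1) (a+1) * w n (c+1) - w n (a+1) * w (n+1) (c+1)) := by
    intro n _
    have e1 : w (n+1) (a+2) = w (n+2) (a+1) + w n (a+1) - b (n+1) * w (n+1) (a+1) - w (n+1) a := by
      have := sol_succ b delta (a+1) (by omega : n + 1 ≠ 0)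
      simpa [hw] using this
    have e2 : w (n+1) (c+2) = w (n+2) (c+1) + w n (c+1) - b (n+1) * w (n+1) (c+1) - w (n+1) c := by
      have := sol_succ b delta (c+1) (by omega : n + 1 ≠ 0)
      simpa [hw] using this
    rw [e1, e2]; ring
  rw [Finset.sum_congr rfl key, Finset.sum_range_sub (fun n =>
    w (n+1) (a+1) * w n (c+1) - w n (a+1) * w (n+1) (c+1))]
  have h1 : w (N+1) (a+1) = 0 := sol_cone b delta (a+1) (N+1) (by omega)
  have h2 : w N (a+1) = 0 := sol_cone b delta (a+1) N (by omega)
  have h3 : w 0 (a+1) = 0 := by simp [hw, sol_left, delta]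
  have h4 : w 0 (c+1) = 0 := by simp [hw, sol_left, delta]
  rw [h1, h2, h3, h4]; ring

lemma Qc_diag (b : ℕ → ℝ) : ∀ c a, Qc b (a+1) (c+1) = Qc b a c + sol b delta (a+c+1) 1 := by
  intro c
  induction c with
  | zero =>
    intro a
    rw [Qc_one b (a+1) (by omega), Qc_zero_right]
    ring_nf
  | succ c ih =>
    intro a
    have hw := Qc_wave b a c
    have ih' := ih (a+1)
    have h2 : a + 1 + c + 1 = a + (c+1) + 1 := by omega
    rw [h2] at ih'
    linarith [hw, ih']

lemma Qc_formula (b : ℕ → ℝ) : ∀ a c, Qc b a c =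
    ∑ k ∈ Finset.range (min a c), resp b (max a c - min a c + 2 * k) := by
  intro a
  induction a with
  | zero => intro c; simp [Qc_zero_left]
  | succ a ih =>
    intro c
    match c with
    | 0 => simp [Qc_zero_right]
    | (c+1) =>
      rw [Qc_diag b c a, ih c]
      have hmin : min (a+1) (c+1) = min a c + 1 := by omega
      rw [hmin]
      have hmax : max (a+1) (c+1) - (min a c + 1) = max a c - min a c := by omega
      rw [hmax, Finset.sum_range_succ]
      congr 1
      unfold resp
      congr 1
      omega


noncomputable def Vmat (b : ℕ → ℝ) (l : ℕ) : Matrix (Fin l) (Fin l) ℝ :=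
  Matrix.of fun i j => sol b delta ((j:ℕ)+1) ((i:ℕ)+1)

lemma Vmat_det (b : ℕ → ℝ) (l : ℕ) : (Vmat b l).det = 1 := by
  rw [Matrix.det_of_upperTriangular]
  · refine Finset.prod_eq_one fun i _ => ?_
    exact sol_diag b ((i:ℕ)+1)
  · intro i j hij
    exact sol_cone b delta ((j:ℕ)+1) ((i:ℕ)+1) (by simpa using hij)

lemma gram (b : ℕ → ℝ) (l : ℕ) (i j : Fin l) :
    ((Vmat b l)ᵀ * Vmat b l) i j = Qc b ((i:ℕ)+1) ((j:ℕ)+1) := by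
  rw [Qc_of_large b ((j:ℕ)+1) (by omega : (i:ℕ)+1 ≤ l)]
  rw [Matrix.mul_apply]
  unfold QQ
  rw [← Fin.sum_univ_eq_sum_range (fun n => sol b delta ((i:ℕ)+1) (n+1) * sol b delta ((j:ℕ)+1) (n+1)) l]
  rfl

lemma qc_cmat (b : ℕ → ℝ) (l : ℕ) (i j : Fin l) :
    Qc b ((Fin.rev i : ℕ)+1) ((Fin.rev j : ℕ)+1) = Cmat (resp b) l ((i:ℕ)+1) ((j:ℕ)+1) := by
  rw [Qc_formula]
  unfold Cmat
  have hi := i.isLt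
  have hj := j.isLt
  rw [Fin.val_rev, Fin.val_rev]
  have h1 : min (l - (i+1) + 1) (l - (j+1) + 1) = l - max ((i:ℕ)+1) ((j:ℕ)+1) + 1 := by omega
  rw [h1]
  have h2 : max (l - ((i:ℕ)+1) + 1) (l - ((j:ℕ)+1) + 1) - (l - max ((i:ℕ)+1) ((j:ℕ)+1) + 1)
      = max ((i:ℕ)+1) ((j:ℕ)+1) - min ((i:ℕ)+1) ((j:ℕ)+1) := by omega
  rw [h2]

lemma cmat_eq_submatrix (b : ℕ → ℝ) (l : ℕ) :
    (Matrix.of fun i j : Fin l => Cmat (resp b) l ((i:ℕ)+1) ((j:ℕ)+1))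
      = ((Vmat b l)ᵀ * Vmat b l).submatrix Fin.rev Fin.rev := by
  ext i j
  rw [Matrix.submatrix_apply, gram, qc_cmat]
  rfl

lemma cmat_det (b : ℕ → ℝ) (l : ℕ) :
    (Matrix.of fun i j : Fin l => Cmat (resp b) l ((i:ℕ)+1) ((j:ℕ)+1)).det = 1 := by
  rw [cmat_eq_submatrix]
  have : ((Vmat b l)ᵀ * Vmat b l).submatrix Fin.rev Fin.rev
      = ((Vmat b l)ᵀ * Vmat b l).submatrix (Fin.revPerm : Fin l ≃ Fin l) (Fin.revPerm : Fin l ≃ Fin l) := rfl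
  rw [this, Matrix.det_submatrix_equiv_self, Matrix.det_mul, Matrix.det_transpose, Vmat_det]
  norm_num

lemma cmat_posdef (b : ℕ → ℝ) (l : ℕ) :
    (Matrix.of fun i j : Fin l => Cmat (resp b) l ((i:ℕ)+1) ((j:ℕ)+1)).PosDef := by
  set B := (Vmat b l).submatrix id Fin.rev with hB
  have hM : (Matrix.of fun i j : Fin l => Cmat (resp b) l ((i:ℕ)+1) ((j:ℕ)+1)) = Bᵀ * B := by
    rw [cmat_eq_submatrix]
    ext i j
    simp [Matrix.mul_apply, hB, Matrix.submatrix_apply]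
  have hdet : B.det * B.det = 1 := by
    have h1 := cmat_det b l
    rw [hM, Matrix.det_mul, Matrix.det_transpose] at h1
    exact h1
  have hBunit : IsUnit B := by
    rw [Matrix.isUnit_iff_isUnit_det, isUnit_iff_ne_zero]
    intro h
    rw [h] at hdet; norm_num at hdet
  have hinj : Function.Injective (B.mulVec) := Matrix.mulVec_injective_iff_isUnit.2 hBunit
  rw [hM, Matrix.posDef_iff_dotProduct_mulVec]
  constructor
  · simpa using Matrix.isHermitian_conjTranspose_mul_self B
  · intro x hx
    have hy : B.mulVec x ≠ 0 := by
      intro h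
      exact hx (hinj (by rw [h, Matrix.mulVec_zero]))
    have : star x ⬝ᵥ (Bᵀ * B) *ᵥ x = star (B *ᵥ x) ⬝ᵥ (B *ᵥ x) := by
      rw [← Matrix.mulVec_mulVec, Matrix.dotProduct_mulVec, star_trivial, star_trivial,
        Matrix.vecMul_transpose]
    rw [this]
    exact Matrix.dotProduct_star_self_pos_iff.2 hy


/-- finite dependence on the potential -/
lemma sol_dep (b b' f : ℕ → ℝ) (m : ℕ) (hb : ∀ i, i ≤ m → b i = b' i) :
    ∀ t n, n + t ≤ 2*m + 2 → sol b f t n = sol b' f t n := by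
  intro t
  induction t using Nat.strong_induction_on with
  | _ t ih =>
    intro n hn
    match t with
    | 0 =>
      match n with
      | 0 => rfl
      | (n+1) => simp [sol]
    | (t+1) =>
      match n with
      | 0 => rw [sol_left, sol_left]
      | (n+1) =>
        rw [sol_succ b f t (by omega : n + 1 ≠ 0), sol_succ b' f t (by omega : n + 1 ≠ 0)]
        rw [ih t (by omega) (n+1+1) (by omega), ih t (by omega) (n+1-1) (by omega),
          ih (t-1) (by omega) (n+1) (by omega)]
        rcases le_or_gt (n+1) m with h | h
        · rw [hb (n+1) h, ih t (by omega) (n+1) (by omega)]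
        · rw [sol_cone b f t (n+1) (by omega), sol_cone b' f t (n+1) (by omega)]
          ring

/-- the leading singularity carries `-(b m - b' m)` -/
lemma sol_edge (b b' : ℕ → ℝ) (m : ℕ) (hm : 1 ≤ m) (hb : ∀ i, i < m → b i = b' i) :
    ∀ k, k < m → sol b delta (m+1+k) (m-k) - sol b' delta (m+1+k) (m-k) = b' m - b m := by
  have hdep : ∀ t n, n + t ≤ 2*m → sol b delta t n = sol b' delta t n := by
    intro t n h
    have := sol_dep b b' delta (m-1) (fun i hi => hb i (by omega)) t n (by omega)
    exact this
  intro k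
  induction k with
  | zero =>
    intro _
    simp only [Nat.add_zero, Nat.sub_zero]
    rw [sol_succ b delta m (by omega : m ≠ 0), sol_succ b' delta m (by omega : m ≠ 0)]
    rw [sol_cone b delta (m-1) m (Nat.sub_lt hm one_pos), sol_cone b' delta (m-1) m (Nat.sub_lt hm one_pos)]
    rw [sol_cone b delta m (m+1) (by omega), sol_cone b' delta m (m+1) (by omega),
      hdep m (m-1) (by omega)]
    rw [sol_diag b m, sol_diag b' m]
    ring
  | succ k ihk =>
    intro hk
    have h1 : m - (k+1) ≠ 0 := by omega
    rw [show m+1+(k+1) = (m+1+k)+1 by omega, sol_succ b delta (m+1+k) h1,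
      sol_succ b' delta (m+1+k) h1]
    have e1 : m - (k+1) + 1 = m - k := by omega
    have e2 : m - (k+1) - 1 + (m+1+k) ≤ 2*m := by omega
    have e3 : m - (k+1) + (m+1+k) ≤ 2*m := by omega
    have e4 : m - (k+1) + (m+1+k-1) ≤ 2*m := by omega
    rw [e1]
    rw [hdep (m+1+k) (m-(k+1)-1) e2, hdep (m+1+k) (m-(k+1)) e3,
      hdep (m+1+k-1) (m-(k+1)) (by omega)]
    rw [hb (m-(k+1)) (by omega)]
    linarith [ihk (by omega : k < m)]


noncomputable def bseq (r : ℕ → ℝ) : ℕ → ℝ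
  | m => sol (fun i => if h : i < m then bseq r i else 0) delta (2*m) 1 - r (2*m - 1)
  termination_by m => m
  decreasing_by exact h

lemma bseq_odd (r : ℕ → ℝ) (m : ℕ) (hm : 1 ≤ m) :
    sol (bseq r) delta (2*m) 1 = r (2*m - 1) := by
  set b' : ℕ → ℝ := fun i => if i < m then bseq r i else 0 with hb'
  have hb'eq : (fun i => if h : i < m then bseq r i else 0) = b' := by
    funext i; by_cases h : i < m <;> simp [hb', h]
  have hbm : bseq r m = sol b' delta (2*m) 1 - r (2*m - 1) := by
    rw [bseq, hb'eq]
  have hedge := sol_edge (bseq r) b' m hm (fun i hi => by simp [hb', hi]) (m-1) (by omega)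
  rw [show m+1+(m-1) = 2*m by omega, show m-(m-1) = 1 by omega] at hedge
  have hb'm : b' m = 0 := by simp [hb']
  rw [hb'm, hbm] at hedge
  linarith

lemma cmat_shift (r : ℕ → ℝ) (l i j : ℕ) :
    Cmat r (l+1) (i+2) (j+2) = Cmat r l (i+1) (j+1) := by
  unfold Cmat
  have h1 : l + 1 - max (i+2) (j+2) + 1 = l - max (i+1) (j+1) + 1 := by omega
  rw [h1]
  refine Finset.sum_congr rfl fun k _ => ?_
  congr 1
  omega

lemma cmat_congr (r r' : ℕ → ℝ) (l : ℕ) (hagree : ∀ s, s ≤ 2*l - 2 → r s = r' s)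
    (i j : ℕ) (hi : 1 ≤ i) (hj : 1 ≤ j) (hi' : i ≤ l) (hj' : j ≤ l) :
    Cmat r l i j = Cmat r' l i j := by
  unfold Cmat
  refine Finset.sum_congr rfl fun k hk => ?_
  simp only [Finset.mem_range] at hk
  exact hagree _ (by omega)

/-- determinant perturbation step -/
lemma even_step (k : ℕ) (r r' : ℕ → ℝ)
    (hagree : ∀ s, s < 2*k → r s = r' s)
    (hdl : (Matrix.of fun i j : Fin (k+1) => Cmat r (k+1) ((i:ℕ)+1) ((j:ℕ)+1)).det = 1)
    (hdl' : (Matrix.of fun i j : Fin (k+1) => Cmat r' (k+1) ((i:ℕ)+1) ((j:ℕ)+1)).det = 1)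
    (hdprev : (Matrix.of fun i j : Fin k => Cmat r' k ((i:ℕ)+1) ((j:ℕ)+1)).det = 1) :
    r (2*k) = r' (2*k) := by
  classical
  set M : Matrix (Fin (k+1)) (Fin (k+1)) ℝ :=
    Matrix.of fun i j : Fin (k+1) => Cmat r (k+1) ((i:ℕ)+1) ((j:ℕ)+1) with hM
  set M' : Matrix (Fin (k+1)) (Fin (k+1)) ℝ :=
    Matrix.of fun i j : Fin (k+1) => Cmat r' (k+1) ((i:ℕ)+1) ((j:ℕ)+1) with hM'
  set d : ℝ := r (2*k) - r' (2*k) with hd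
  have entry_ne : ∀ i j : Fin (k+1), 1 ≤ (i:ℕ) + (j:ℕ) →
      Cmat r (k+1) ((i:ℕ)+1) ((j:ℕ)+1) = Cmat r' (k+1) ((i:ℕ)+1) ((j:ℕ)+1) := by
    intro i j hij
    unfold Cmat
    refine Finset.sum_congr rfl fun kk hkk => ?_
    simp only [Finset.mem_range] at hkk
    have hik := i.isLt
    have hjk := j.isLt
    exact hagree _ (by omega)
  have entry00 : Cmat r (k+1) 1 1 = Cmat r' (k+1) 1 1 + d := by
    unfold Cmat
    simp only [max_self, min_self, Nat.sub_self, Nat.zero_add]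
    rw [show k + 1 - 1 + 1 = k + 1 by omega, Finset.sum_range_succ, Finset.sum_range_succ]
    have hsum : ∀ kk ∈ Finset.range k, r (2 * kk) = r' (2 * kk) := by
      intro kk hkk
      simp only [Finset.mem_range] at hkk
      exact hagree _ (by omega)
    rw [Finset.sum_congr rfl hsum, hd]
    ring
  have key : M = M'.updateRow 0 (M' 0 + Pi.single 0 d) := by
    ext i j
    rw [Matrix.updateRow_apply]
    by_cases hi : i = 0
    · subst hi
      simp only [if_pos rfl, Pi.add_apply]
      by_cases hj : j = 0
      · subst hj
        rw [Pi.single_eq_same]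
        simp only [hM, hM', Matrix.of_apply, Fin.val_zero]
        exact entry00
      · rw [Pi.single_eq_of_ne hj, add_zero]
        simp only [hM, hM', Matrix.of_apply, Fin.val_zero]
        refine entry_ne 0 j ?_
        have : (j:ℕ) ≠ 0 := fun h => hj (Fin.ext h)
        simp only [Fin.val_zero]
        omega
    · simp only [if_neg hi, hM, hM', Matrix.of_apply]
      refine entry_ne i j ?_
      have : (i:ℕ) ≠ 0 := fun h => hi (Fin.ext h)
      omega
  have hsub : (M'.updateRow 0 (Pi.single (0 : Fin (k+1)) d)).submatrix Fin.succ (Fin.succAbove 0)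
      = Matrix.of fun i j : Fin k => Cmat r' k ((i:ℕ)+1) ((j:ℕ)+1) := by
    ext i j
    rw [Fin.succAbove_zero, Matrix.submatrix_apply, Matrix.updateRow_ne (Fin.succ_ne_zero i)]
    simp only [hM', Matrix.of_apply, Fin.val_succ]
    exact cmat_shift r' k i j
  have hminor : (M'.updateRow 0 (Pi.single (0 : Fin (k+1)) d)).det = d := by
    rw [Matrix.det_succ_row_zero, Finset.sum_eq_single 0]
    · simp only [Fin.val_zero, pow_zero, one_mul, Matrix.updateRow_apply, if_pos rfl,
        Pi.single_eq_same]
      rw [hsub, hdprev, mul_one]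
      simp
    · intro j _ hj
      rw [Matrix.updateRow_apply, if_pos rfl, Pi.single_eq_of_ne hj]
      ring
    · intro h
      simp at h
  have hexp : M.det = M'.det + d := by
    rw [key, Matrix.det_updateRow_add, Matrix.updateRow_eq_self, hminor]
  rw [hexp, hdl'] at hdl
  have hd0 : d = 0 := by linarith
  rw [hd] at hd0
  linarith
lemma resp_unique (T : ℕ) (r r' : ℕ → ℝ) (h0 : r 0 = r' 0)
    (hodd : ∀ m, 1 ≤ m → r (2*m-1) = r' (2*m-1))
    (hd : ∀ l, 1 ≤ l → l ≤ T →
      (Matrix.of fun i j : Fin l => Cmat r l ((i:ℕ)+1) ((j:ℕ)+1)).det = 1)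
    (hd' : ∀ l, 1 ≤ l → l ≤ T →
      (Matrix.of fun i j : Fin l => Cmat r' l ((i:ℕ)+1) ((j:ℕ)+1)).det = 1) :
    ∀ s, s ≤ 2*T - 2 → r s = r' s := by
  intro s
  induction s using Nat.strong_induction_on with
  | _ s ih =>
    intro hs
    rcases Nat.even_or_odd s with ⟨c, hc⟩ | ⟨c, hc⟩
    · rcases Nat.eq_zero_or_pos c with h | h
      · subst hc; rw [h]; exact h0
      · have hsk : s = 2 * c := by omega
        have hT : c + 1 ≤ T := by omega
        have := even_step c r r'
          (fun s' hs' => ih s' (by omega) (by omega))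
          (hd (c+1) (by omega) hT) (hd' (c+1) (by omega) hT)
          (hd' c (by omega) (by omega))
        rw [hsk]; exact this
    · have hm : s = 2 * (c + 1) - 1 := by omega
      rw [hm]; exact hodd (c+1) (by omega)

lemma cmat_matrix_congr (r r' : ℕ → ℝ) (l : ℕ) (hagree : ∀ s, s ≤ 2*l - 2 → r s = r' s) :
    (Matrix.of fun i j : Fin l => Cmat r l ((i:ℕ)+1) ((j:ℕ)+1))
      = (Matrix.of fun i j : Fin l => Cmat r' l ((i:ℕ)+1) ((j:ℕ)+1)) := by
  ext i j
  simp only [Matrix.of_apply]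
  exact cmat_congr r r' l hagree _ _ (by omega) (by omega) (by omega) (by omega)

lemma resp_zero (b : ℕ → ℝ) : resp b 0 = 1 := sol_diag b 1


end IPAux

/-- Characterization of the inverse data: `(1, r_1, …, r_{2T-2})` is a response vector of the
discrete Schrödinger dynamical system for some potential iff the connecting matrix `C^T` is
positive definite and `det C^l = 1` for every `1 ≤ l ≤ T`. -/
theorem characterization_inverse_data (T : ℕ) (hT : 1 ≤ T) (r : ℕ → ℝ) (hr0 : r 0 = 1) :
    (∃ b : ℕ → ℝ, ∀ s, s ≤ 2 * T - 2 → sol b delta (s + 1) 1 = r s) ↔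
      ((Matrix.of fun i j : Fin T => Cmat r T ((i : ℕ) + 1) ((j : ℕ) + 1)).PosDef ∧
       (∀ l, 1 ≤ l → l ≤ T →
        (Matrix.of fun i j : Fin l => Cmat r l ((i : ℕ) + 1) ((j : ℕ) + 1)).det = 1)) := by
  open IPAux in
  constructor
  · rintro ⟨b, hb⟩
    have hent : ∀ l, l ≤ T →
        (Matrix.of fun i j : Fin l => Cmat r l ((i:ℕ)+1) ((j:ℕ)+1))
          = (Matrix.of fun i j : Fin l => Cmat (IPAux.resp b) l ((i:ℕ)+1) ((j:ℕ)+1)) :=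
      fun l hl => IPAux.cmat_matrix_congr r (IPAux.resp b) l
        (fun s hs => (hb s (by omega)).symm)
    constructor
    · rw [hent T le_rfl]; exact IPAux.cmat_posdef b T
    · intro l h1 h2; rw [hent l h2]; exact IPAux.cmat_det b l
  · rintro ⟨-, hdet⟩
    refine ⟨IPAux.bseq r, fun s hs => ?_⟩
    have h0 : IPAux.resp (IPAux.bseq r) 0 = r 0 := by rw [IPAux.resp_zero, hr0]
    have hodd : ∀ m, 1 ≤ m → IPAux.resp (IPAux.bseq r) (2*m-1) = r (2*m-1) := by
      intro m hm
      unfold IPAux.resp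
      rw [show 2*m-1+1 = 2*m by omega]
      exact IPAux.bseq_odd r m hm
    have hd' : ∀ l, 1 ≤ l → l ≤ T →
        (Matrix.of fun i j : Fin l => Cmat (IPAux.resp (IPAux.bseq r)) l ((i:ℕ)+1) ((j:ℕ)+1)).det = 1 :=
      fun l _ _ => IPAux.cmat_det (IPAux.bseq r) l
    have := IPAux.resp_unique T (IPAux.resp (IPAux.bseq r)) r h0 hodd hd' hdet s hs
    simpa [IPAux.resp] using this
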